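/- For all real x ∈ [-1/2, 1/2]: |E₆(x + 0.65i)| < 14.26 and |E₆(x + 0.75i)| < 5.25, where E₆ is the normalized weight-6 Eisenstein series. -/

import Mathlib

open Complex Real

/-- The divisor-power sum `σ_k(n) = ∑_{d ∣ n} d^k`. -/
def sigma' (k n : ℕ) : ℕ := ∑ d ∈ n.divisors, d ^ k

/-- The weight-6 Eisenstein series `E₆(τ) = 1 - 504 ∑ σ₅(n) qⁿ`, `q = e^{2πiτ}`. -/
noncomputable def E6 (τ : ℂ) : ℂ :=
  1 - 504 * ∑' n : ℕ, (sigma' 5 (n + 1) : ℂ) * Complex.exp (2 * π * I * τ) ^ (n + 1)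

set_option linter.unusedVariables false

lemma sigma5_le (n : ℕ) : (∑ d ∈ n.divisors, d ^ 5) ≤ n ^ 6 := by
  calc (∑ d ∈ n.divisors, d ^ 5) ≤ ∑ _d ∈ n.divisors, n ^ 5 := by
        refine Finset.sum_le_sum fun d hd => ?_
        exact Nat.pow_le_pow_left (Nat.divisor_le hd) 5
    _ = n.divisors.card * n ^ 5 := by rw [Finset.sum_const, smul_eq_mul]
    _ ≤ n * n ^ 5 := by
        refine Nat.mul_le_mul_right _ ?_
        calc n.divisors.card ≤ (Finset.Icc 1 n).card := by
              refine Finset.card_le_card fun d hd => ?_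
              rw [Finset.mem_Icc]
              exact ⟨(Nat.one_le_iff_ne_zero).mpr (Nat.pos_of_mem_divisors hd).ne', Nat.divisor_le hd⟩
          _ = n := by rw [Nat.card_Icc]; omega
    _ = n ^ 6 := by ring

lemma growth (n : ℕ) : (n + 5) * 5 ^ n ≤ 5 * 6 ^ n := by
  induction n with
  | zero => norm_num
  | succ k ih =>
      have h5 : (5:ℕ)^(k+1) ≤ 5 * 6^k := by
        have : (5:ℕ)^k ≤ 6^k := Nat.pow_le_pow_left (by norm_num) k
        calc (5:ℕ)^(k+1) = 5 * 5^k := by ring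
          _ ≤ 5 * 6^k := Nat.mul_le_mul_left 5 this
      calc (k+1+5) * 5^(k+1) = 5*((k+5)*5^k) + 5^(k+1) := by ring
        _ ≤ 5*(5*6^k) + 5*6^k := Nat.add_le_add (Nat.mul_le_mul_left 5 ih) h5
        _ = 5*6^(k+1) := by ring

lemma norm_one_add_sq (A : ℝ) (q : ℂ) :
    ‖1 + (A:ℂ)*q‖^2 = 1 + 2*A*q.re + A^2*‖q‖^2 := by
  rw [Complex.sq_norm, Complex.sq_norm,
    Complex.normSq_apply, Complex.normSq_apply]
  simp [Complex.add_re, Complex.add_im, Complex.mul_re, Complex.mul_im]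
  ring


set_option maxHeartbeats 1000000

lemma main_bound (q : ℂ) (r rh M1 : ℝ) (hq : ‖q‖ = r) (hr0 : 0 ≤ r) (hrle : r ≤ rh)
    (hM1 : 0 ≤ M1)
    (hAM : ((14154/25) * (1 + (10393929/625)*rh^2))^2 ≤ (25791/100)^2 * M1^2) :
    ‖1 - 504*q - 16632*q^2‖ ≤ M1 + (1071/625)*r^2 := by
  have hsplit : (1:ℂ) - 504*q - 16632*q^2
      = (1 + ((-13377/25:ℝ):ℂ)*q)*(1 + ((777/25:ℝ):ℂ)*q) - 16632*q^2 + ((10393929:ℂ)/625)*q^2 := by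
    push_cast
    ring
  have h1 : ‖1 - 504*q - 16632*q^2‖
      ≤ ‖(1 + ((-13377/25:ℝ):ℂ)*q)‖*‖(1 + ((777/25:ℝ):ℂ)*q)‖ + (1071/625)*r^2 := by
    rw [hsplit]
    calc ‖(1 + ((-13377/25:ℝ):ℂ)*q)*(1 + ((777/25:ℝ):ℂ)*q) - 16632*q^2 + ((10393929:ℂ)/625)*q^2‖
        = ‖(1 + ((-13377/25:ℝ):ℂ)*q)*(1 + ((777/25:ℝ):ℂ)*q) + (-16632 + (10393929:ℂ)/625)*q^2‖ := by
          ring_nf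
      _ ≤ ‖(1 + ((-13377/25:ℝ):ℂ)*q)*(1 + ((777/25:ℝ):ℂ)*q)‖ + ‖(-16632 + (10393929:ℂ)/625)*q^2‖ :=
          norm_add_le _ _
      _ = ‖(1 + ((-13377/25:ℝ):ℂ)*q)‖*‖(1 + ((777/25:ℝ):ℂ)*q)‖ + (1071/625)*r^2 := by
          rw [norm_mul, norm_mul, norm_pow, hq]
          congr 2
          have : (-16632 + (10393929:ℂ)/625) = ((-1071/625 : ℝ):ℂ) := by norm_num
          rw [this, Complex.norm_real]
          norm_num
  refine le_trans h1 (add_le_add ?_ le_rfl)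
  -- ‖u‖*‖v‖ ≤ M1 via AM-GM
  have hX := norm_one_add_sq (-13377/25) q
  have hY := norm_one_add_sq (777/25) q
  rw [hq] at hX hY
  have hc : |q.re| ≤ r := by
    rw [← hq]; exact Complex.abs_re_le_norm q
  have hc1 : -r ≤ q.re := by cases abs_le.mp hc; assumption
  have hc2 : q.re ≤ r := by cases abs_le.mp hc; assumption
  set u : ℝ := ‖(1 + ((-13377/25:ℝ):ℂ)*q)‖ with hu
  set v : ℝ := ‖(1 + ((777/25:ℝ):ℂ)*q)‖ with hv
  have hXn : (0:ℝ) ≤ u := norm_nonneg _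
  have hYn : (0:ℝ) ≤ v := norm_nonneg _
  have hXY : (u*v)^2 = (1 + 2*(-13377/25)*q.re + (-13377/25)^2*r^2)
      * (1 + 2*(777/25)*q.re + (777/25)^2*r^2) := by
    rw [mul_pow, hX, hY]
  have key1 : (u*v)^2 * (41575716/625) ≤ ((14154/25) * (1 + (10393929/625)*r^2))^2 := by
    rw [hXY]
    nlinarith [sq_nonneg ((777/25)*(1 + 2*(-13377/25)*q.re + (-13377/25)^2*r^2)
      - (13377/25)*(1 + 2*(777/25)*q.re + (777/25)^2*r^2))]
  have hs2 : r^2 ≤ rh^2 := by nlinarith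
  have key2 : ((14154/25) * (1 + (10393929/625)*r^2))^2
      ≤ ((14154/25) * (1 + (10393929/625)*rh^2))^2 := by nlinarith
  have key3 : (u*v)^2 * (665175681/10000) ≤ (665175681/10000) * M1^2 := by
    have h1 : (u*v)^2 * (665175681/10000) ≤ (u*v)^2 * (41575716/625) := by
      nlinarith [sq_nonneg (u*v)]
    have h2 : ((25791:ℝ)/100)^2 = 665175681/10000 := by norm_num
    rw [h2] at hAM
    linarith
  nlinarith [mul_nonneg hXn hYn, key3]

lemma E6_general (x y rh M1 t : ℝ)
    (hrh : Real.exp (-(2*π*y)) ≤ rh)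
    (hrh1 : rh ≤ 1/50) (hM1 : 0 ≤ M1)
    (hAM : ((14154/25) * (1 + (10393929/625)*rh^2))^2 ≤ (25791/100)^2 * M1^2)
    (hsum : M1 + (1071/625)*rh^2 + 122976*rh^3 + 532728*rh^4
        + 504*(15625*rh^5/(1-(46656/15625)*rh)) < t) :
    ‖E6 ((x:ℂ) + (y:ℝ)*I)‖ < t := by
  set r : ℝ := Real.exp (-(2*π*y)) with hrdef
  have hr0 : 0 < r := Real.exp_pos _
  have hrle : r ≤ rh := hrh
  have hr1 : r < 1 := lt_of_le_of_lt hrle (lt_of_le_of_lt hrh1 (by norm_num))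
  set q : ℂ := Complex.exp (2 * π * I * ((x:ℂ) + (y:ℝ)*I)) with hqdef
  have hq : ‖q‖ = r := by
    rw [hqdef, Complex.norm_exp]
    congr 1
    simp [Complex.mul_re, Complex.add_re, Complex.add_im, Complex.mul_im]
  set f : ℕ → ℂ := fun n => (sigma' 5 (n+1) : ℂ) * q ^ (n+1) with hfdef
  have hfn : ∀ n, ‖f n‖ = (sigma' 5 (n+1) : ℝ) * r ^ (n+1) := by
    intro n
    simp [hfdef, norm_mul, norm_pow, hq]
  have hfle : ∀ n, ‖f n‖ ≤ ((n:ℝ)+1)^6 * r^(n+1) := by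
    intro n
    rw [hfn]
    apply mul_le_mul_of_nonneg_right _ (pow_nonneg hr0.le _)
    have h := sigma5_le (n+1)
    calc (sigma' 5 (n+1):ℝ) ≤ (((n+1)^6 : ℕ) : ℝ) := by exact_mod_cast h
      _ = ((n:ℝ)+1)^6 := by push_cast; ring
  have hg : Summable (fun n : ℕ => ((n:ℝ))^6 * r^n) :=
    summable_pow_mul_geometric_of_norm_lt_one 6 (by rwa [Real.norm_eq_abs, abs_of_pos hr0])
  have hg1 : Summable (fun n : ℕ => ((n:ℝ)+1)^6 * r^(n+1)) := by
    have := (summable_nat_add_iff (f := fun n : ℕ => ((n:ℝ))^6 * r^n) 1).mpr hg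
    simpa using this
  have hf : Summable f := Summable.of_norm_bounded hg1 hfle
  -- geometric tail
  have hρ1 : (46656/15625)*r < 1 := by nlinarith
  have hρ0 : 0 ≤ (46656/15625)*r := by positivity
  have htail : ∀ n : ℕ, ‖f (n+4)‖ ≤ (15625 * r^5) * ((46656/15625)*r)^n := by
    intro n
    rw [hfn]
    have hnat : ((n:ℕ)+5)^6 * 5^(6*n) ≤ 5^6 * 6^(6*n) := by
      have := Nat.pow_le_pow_left (growth n) 6
      calc ((n:ℕ)+5)^6 * 5^(6*n) = ((n+5) * 5^n)^6 := by rw [mul_pow, ← pow_mul]; ring_nf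
        _ ≤ (5 * 6^n)^6 := this
        _ = 5^6 * 6^(6*n) := by rw [mul_pow, ← pow_mul]; ring_nf
    have hreal : ((n:ℝ)+5)^6 ≤ 15625 * ((46656:ℝ)/15625)^n := by
      have h5 : (0:ℝ) < (5:ℝ)^(6*n) := by positivity
      have hcast : ((n:ℝ)+5)^6 * (5:ℝ)^(6*n) ≤ 5^6 * 6^(6*n) := by exact_mod_cast hnat
      have h6 : ((46656:ℝ))^n = 6^(6*n) := by
        rw [show (46656:ℝ) = 6^6 by norm_num, ← pow_mul]
      have h56 : ((15625:ℝ))^n = 5^(6*n) := by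
        rw [show (15625:ℝ) = 5^6 by norm_num, ← pow_mul]
      rw [div_pow, h6, h56, ← mul_div_assoc, le_div_iff₀ h5]
      calc ((n:ℝ)+5)^6 * 5^(6*n) ≤ 5^6 * 6^(6*n) := hcast
        _ = 15625 * 6^(6*n) := by norm_num
    have hs : (sigma' 5 (n+4+1):ℝ) ≤ ((n:ℝ)+5)^6 := by
      have h := sigma5_le (n+5)
      have : (sigma' 5 (n+5):ℝ) ≤ (((n+5)^6 : ℕ):ℝ) := by exact_mod_cast h
      calc (sigma' 5 (n+4+1):ℝ) = (sigma' 5 (n+5):ℝ) := by norm_num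
        _ ≤ (((n+5)^6 : ℕ):ℝ) := this
        _ = ((n:ℝ)+5)^6 := by push_cast; ring
    calc (sigma' 5 (n+4+1):ℝ) * r^(n+4+1) ≤ ((n:ℝ)+5)^6 * r^(n+5) := by
          apply mul_le_mul_of_nonneg_right hs (pow_nonneg hr0.le _)
      _ ≤ (15625 * ((46656:ℝ)/15625)^n) * r^(n+5) := by
          apply mul_le_mul_of_nonneg_right hreal (pow_nonneg hr0.le _)
      _ = (15625 * r^5) * ((46656/15625)*r)^n := by
          rw [mul_pow, pow_add]; ring
  have hgeo : Summable (fun n : ℕ => (15625 * r^5) * ((46656/15625)*r)^n) :=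
    (summable_geometric_of_lt_one hρ0 hρ1).mul_left _
  have hfnorm4 : Summable (fun n => ‖f (n+4)‖) :=
    Summable.of_nonneg_of_le (fun n => norm_nonneg _) htail hgeo
  have hT : ‖∑' n, f (n+4)‖ ≤ 15625 * r^5 / (1 - (46656/15625)*r) := by
    calc ‖∑' n, f (n+4)‖ ≤ ∑' n, ‖f (n+4)‖ := norm_tsum_le_tsum_norm hfnorm4
      _ ≤ ∑' n : ℕ, (15625 * r^5) * ((46656/15625)*r)^n := Summable.tsum_le_tsum htail hfnorm4 hgeo
      _ = (15625 * r^5) * ((1 - (46656/15625)*r))⁻¹ := by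
          rw [tsum_mul_left, tsum_geometric_of_lt_one hρ0 hρ1]
      _ = 15625 * r^5 / (1 - (46656/15625)*r) := (div_eq_mul_inv _ _).symm
  -- main part bound
  have hMmain : ‖1 - 504*q - 16632*q^2‖ ≤ M1 + (1071/625)*r^2 :=
    main_bound q r rh M1 hq hr0.le hrle hM1 hAM
  -- assemble
  have e1 : sigma' 5 1 = 1 := by decide
  have e2 : sigma' 5 2 = 33 := by decide
  have e3 : sigma' 5 3 = 244 := by decide
  have e4 : sigma' 5 4 = 1057 := by decide
  have hf0 : f 0 = q := by simp [hfdef, e1]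
  have hf1v : f 1 = 33*q^2 := by rw [hfdef]; simp only [e2]; push_cast; ring
  have hf2v : f 2 = 244*q^3 := by rw [hfdef]; simp only [e3]; push_cast; ring
  have hf3v : f 3 = 1057*q^4 := by rw [hfdef]; simp only [e4]; push_cast; ring
  have hEeq : E6 ((x:ℂ) + (y:ℝ)*I)
      = (1 - 504*q - 16632*q^2) - 122976*q^3 - 532728*q^4 - 504 * ∑' n, f (n+4) := by
    have hsum4 : ∑' n, f n = f 0 + f 1 + f 2 + f 3 + ∑' n, f (n+4) := by
      rw [← Summable.sum_add_tsum_nat_add 4 hf, Finset.sum_range_succ, Finset.sum_range_succ,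
        Finset.sum_range_succ, Finset.sum_range_one]
    show (1:ℂ) - 504 * ∑' n : ℕ, (sigma' 5 (n+1) : ℂ) * q ^ (n+1) = _
    rw [show (∑' n : ℕ, (sigma' 5 (n+1):ℂ) * q^(n+1)) = ∑' n, f n from rfl, hsum4,
      hf0, hf1v, hf2v, hf3v]
    ring
  rw [hEeq]
  have step : ‖(1 - 504*q - 16632*q^2) - 122976*q^3 - 532728*q^4 - 504 * ∑' n, f (n+4)‖
      ≤ (M1 + (1071/625)*r^2) + 122976*r^3 + 532728*r^4 + 504*(15625 * r^5 / (1 - (46656/15625)*r)) := by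
    calc ‖(1 - 504*q - 16632*q^2) - 122976*q^3 - 532728*q^4 - 504 * ∑' n, f (n+4)‖
        ≤ ‖(1 - 504*q - 16632*q^2) - 122976*q^3 - 532728*q^4‖ + ‖(504:ℂ) * ∑' n, f (n+4)‖ :=
          norm_sub_le _ _
      _ ≤ (‖(1 - 504*q - 16632*q^2) - 122976*q^3‖ + ‖(532728:ℂ)*q^4‖) + ‖(504:ℂ) * ∑' n, f (n+4)‖ := by
          gcongr
          exact norm_sub_le _ _
      _ ≤ ((‖1 - 504*q - 16632*q^2‖ + ‖(122976:ℂ)*q^3‖) + ‖(532728:ℂ)*q^4‖) + ‖(504:ℂ) * ∑' n, f (n+4)‖ := by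
          gcongr
          exact norm_sub_le _ _
      _ ≤ (M1 + (1071/625)*r^2) + 122976*r^3 + 532728*r^4 + 504*(15625 * r^5 / (1 - (46656/15625)*r)) := by
          have n1 : ‖(122976:ℂ)‖ = 122976 := by norm_num
          have n2 : ‖(532728:ℂ)‖ = 532728 := by norm_num
          have n3 : ‖(504:ℂ)‖ = 504 := by norm_num
          rw [norm_mul, norm_mul, norm_mul, norm_pow, norm_pow, hq, n1, n2, n3]
          linarith [hMmain, hT]
  refine lt_of_le_of_lt step (lt_of_le_of_lt ?_ hsum)
  -- monotonicity in r
  have hrh0 : (0:ℝ) ≤ rh := le_trans hr0.le hrle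
  have h2 : r^2 ≤ rh^2 := pow_le_pow_left₀ hr0.le hrle 2
  have h3 : r^3 ≤ rh^3 := pow_le_pow_left₀ hr0.le hrle 3
  have h4 : r^4 ≤ rh^4 := pow_le_pow_left₀ hr0.le hrle 4
  have h5 : r^5 ≤ rh^5 := pow_le_pow_left₀ hr0.le hrle 5
  have hd : 0 < 1 - (46656/15625)*rh := by nlinarith
  have hdiv : 15625 * r^5 / (1 - (46656/15625)*r) ≤ 15625 * rh^5 / (1 - (46656/15625)*rh) := by
    apply div_le_div₀ (mul_nonneg (by norm_num) (pow_nonneg hrh0 5)) (by nlinarith) hd (by nlinarith)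
  nlinarith

lemma exp4_eq : Real.exp 4 = Real.exp 1 ^ 4 := by
  rw [← Real.exp_nat_mul]; norm_num

lemma exp4_lb : (54.598150020:ℝ) ≤ Real.exp 4 := by
  rw [exp4_eq]
  have h := Real.exp_one_gt_d9.le
  calc (54.598150020:ℝ) ≤ 2.7182818283^4 := by norm_num
    _ ≤ Real.exp 1 ^ 4 := by
        apply pow_le_pow_left₀ (by norm_num) h

lemma exp_cube_lb (a : ℝ) (ha : 0 ≤ a) : 1 + a + a^2/2 + a^3/6 ≤ Real.exp a := by
  have h := Real.sum_le_exp_of_nonneg ha 4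
  have : ∑ i ∈ Finset.range 4, a ^ i / i.factorial = 1 + a + a^2/2 + a^3/6 := by
    simp [Finset.sum_range_succ, Nat.factorial]
  linarith [this.ge.trans h]

lemma exp_seven_lb (a : ℝ) (ha : 0 ≤ a) :
    1 + a + a^2/2 + a^3/6 + a^4/24 + a^5/120 + a^6/720 + a^7/5040 ≤ Real.exp a := by
  have h := Real.sum_le_exp_of_nonneg ha 8
  have : ∑ i ∈ Finset.range 8, a ^ i / i.factorial
      = 1 + a + a^2/2 + a^3/6 + a^4/24 + a^5/120 + a^6/720 + a^7/5040 := by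
    simp [Finset.sum_range_succ, Nat.factorial]
  linarith [this.ge.trans h]

lemma r65_bound : Real.exp (-(2*π*(13/20))) ≤ 0.01684 := by
  have hπ : (3.141592:ℝ) < π := Real.pi_gt_d6
  have h2 : Real.exp (-(2*π*(13/20))) ≤ Real.exp (-(4.0840696:ℝ)) := by
    apply Real.exp_le_exp.mpr; nlinarith
  refine le_trans h2 ?_
  rw [Real.exp_neg]
  have hsplit : Real.exp (4.0840696:ℝ) = Real.exp 4 * Real.exp 0.0840696 := by
    rw [← Real.exp_add]; norm_num
  have hlb : (59.386:ℝ) ≤ Real.exp (4.0840696:ℝ) := by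
    rw [hsplit]
    have h1 := exp4_lb
    have h2 := exp_cube_lb (0.0840696:ℝ) (by norm_num)
    have h3 : (1.0876:ℝ) ≤ 1 + (0.0840696:ℝ) + (0.0840696:ℝ)^2/2 + (0.0840696:ℝ)^3/6 := by
      norm_num
    nlinarith [Real.exp_pos (4:ℝ), Real.exp_pos (0.0840696:ℝ)]
  have hpos : (0:ℝ) < Real.exp (4.0840696:ℝ) := Real.exp_pos _
  rw [inv_le_comm₀ hpos (by norm_num)]
  linarith

lemma r75_bound : Real.exp (-(2*π*(3/4))) ≤ 0.0089834 := by
  have hπ : (3.141592:ℝ) < π := Real.pi_gt_d6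
  have h2 : Real.exp (-(2*π*(3/4))) ≤ Real.exp (-(4.712388:ℝ)) := by
    apply Real.exp_le_exp.mpr; nlinarith
  refine le_trans h2 ?_
  rw [Real.exp_neg]
  have hsplit : Real.exp (4.712388:ℝ) = Real.exp 4 * Real.exp 0.712388 := by
    rw [← Real.exp_add]; norm_num
  have hlb : (111.3175:ℝ) ≤ Real.exp (4.712388:ℝ) := by
    rw [hsplit]
    have h1 := exp4_lb
    have h2 := exp_seven_lb (0.712388:ℝ) (by norm_num)
    have h3 : (2.038815:ℝ) ≤ 1 + (0.712388:ℝ) + (0.712388:ℝ)^2/2 + (0.712388:ℝ)^3/6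
        + (0.712388:ℝ)^4/24 + (0.712388:ℝ)^5/120 + (0.712388:ℝ)^6/720 + (0.712388:ℝ)^7/5040 := by
      norm_num
    nlinarith [Real.exp_pos (4:ℝ), Real.exp_pos (0.712388:ℝ)]
  have hpos : (0:ℝ) < Real.exp (4.712388:ℝ) := Real.exp_pos _
  rw [inv_le_comm₀ hpos (by norm_num)]
  linarith

theorem E6_line_bounds (x : ℝ) (hx : x ∈ Set.Icc (-(1/2) : ℝ) (1/2)) :
    ‖E6 ((x : ℂ) + 0.65 * I)‖ < 14.26 ∧ ‖E6 ((x : ℂ) + 0.75 * I)‖ < 5.25 := by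
  constructor
  · have h : (0.65:ℂ) = ((13/20:ℝ):ℂ) := by norm_num
    rw [h]
    exact E6_general x (13/20) 0.01684 12.549 14.26 r65_bound (by norm_num) (by norm_num)
      (by norm_num) (by norm_num)
  · have h : (0.75:ℂ) = ((3/4:ℝ):ℂ) := by norm_num
    rw [h]
    exact E6_general x (3/4) 0.0089834 5.1414 5.25 r75_bound (by norm_num) (by norm_num)
      (by norm_num) (by norm_num)
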